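/- For any graph G, λ_g(G) = λ(G) + 1 if and only if no LD-code of G is global, i.e., every LD-set of G of minimum cardinality λ(G) fails to be an LD-set of Ḡ. -/

import Mathlib

variable {V : Type*}

/-- `S` is a dominating set of `G`: every vertex outside `S` has a neighbor in `S`. -/
def IsDominatingSet (G : SimpleGraph V) (S : Set V) : Prop :=
  ∀ v ∉ S, (G.neighborSet v ∩ S).Nonempty

/-- `S` is a locating-dominating set of `G`. -/
def IsLDSet (G : SimpleGraph V) (S : Set V) : Prop :=
  IsDominatingSet G S ∧
    ∀ u ∉ S, ∀ v ∉ S, G.neighborSet u ∩ S = G.neighborSet v ∩ S → u = v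

/-- The location-domination number of `G`. -/
noncomputable def ldNum [Fintype V] (G : SimpleGraph V) : ℕ :=
  sInf {n | ∃ S : Set V, IsLDSet G S ∧ S.ncard = n}

/-- `S` is a global LD-set of `G`: an LD-set of both `G` and its complement. -/
def IsGlobalLDSet (G : SimpleGraph V) (S : Set V) : Prop :=
  IsLDSet G S ∧ IsLDSet Gᶜ S

/-- The global location-domination number of `G`. -/
noncomputable def gldNum [Fintype V] (G : SimpleGraph V) : ℕ :=
  sInf {n | ∃ S : Set V, IsGlobalLDSet G S ∧ S.ncard = n}

lemma univ_ld (G : SimpleGraph V) : IsLDSet G Set.univ :=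
  ⟨fun v hv => absurd (Set.mem_univ v) hv, fun u hu => absurd (Set.mem_univ u) hu⟩

lemma compl_nbr_inter {G : SimpleGraph V} {S : Set V} {v : V} (hv : v ∉ S) :
    Gᶜ.neighborSet v ∩ S = S \ (G.neighborSet v ∩ S) := by
  ext s
  simp only [Set.mem_inter_iff, SimpleGraph.mem_neighborSet, SimpleGraph.compl_adj,
    Set.mem_diff]
  constructor
  · rintro ⟨⟨hne, hna⟩, hs⟩; exact ⟨hs, fun h => hna h.1⟩
  · rintro ⟨hs, hna⟩
    exact ⟨⟨fun h => hv (h ▸ hs), fun h => hna ⟨h, hs⟩⟩, hs⟩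

lemma extend_global {G : SimpleGraph V} {S : Set V} (hS : IsLDSet G S) :
    ∃ T : Set V, IsGlobalLDSet G T ∧ T.ncard ≤ S.ncard + 1 := by
  by_cases hc : IsLDSet Gᶜ S
  · exact ⟨S, ⟨hS, hc⟩, Nat.le_succ _⟩
  -- locating for Gᶜ holds automatically
  have loc_c : ∀ u ∉ S, ∀ v ∉ S,
      Gᶜ.neighborSet u ∩ S = Gᶜ.neighborSet v ∩ S → u = v := by
    intro u hu v hv h
    rw [compl_nbr_inter hu, compl_nbr_inter hv] at h
    apply hS.2 u hu v hv
    have h1 : G.neighborSet u ∩ S ⊆ S := Set.inter_subset_right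
    have h2 : G.neighborSet v ∩ S ⊆ S := Set.inter_subset_right
    rw [← Set.diff_diff_cancel_left h1, ← Set.diff_diff_cancel_left h2, h]
  -- so domination fails: some u ∉ S adjacent to all of S
  have : ∃ u, u ∉ S ∧ G.neighborSet u ∩ S = S := by
    by_contra hn
    push_neg at hn
    exact hc ⟨fun v hv => by
      rw [compl_nbr_inter hv]
      exact Set.sdiff_nonempty.mpr fun hsub =>
        hn v hv (le_antisymm Set.inter_subset_right hsub), loc_c⟩
  obtain ⟨u, hu, huS⟩ := this
  refine ⟨insert u S, ⟨⟨?_, ?_⟩, ?_, ?_⟩, Set.ncard_insert_le u S⟩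
  · intro v hv
    have hv' : v ∉ S := fun h => hv (Set.mem_insert_iff.mpr (Or.inr h))
    obtain ⟨s, hs⟩ := hS.1 v hv'
    exact ⟨s, hs.1, Set.mem_insert_iff.mpr (Or.inr hs.2)⟩
  · intro a ha b hb h
    have ha' : a ∉ S := fun h => ha (Set.mem_insert_iff.mpr (Or.inr h))
    have hb' : b ∉ S := fun h => hb (Set.mem_insert_iff.mpr (Or.inr h))
    apply hS.2 a ha' b hb'
    have : ∀ c : V, G.neighborSet c ∩ S = (G.neighborSet c ∩ insert u S) ∩ S := by
      intro c
      rw [Set.inter_assoc, Set.inter_eq_self_of_subset_right (Set.subset_insert u S)]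
    rw [this a, this b, h]
  · -- domination of Gᶜ by insert u S
    intro v hv
    have hv' : v ∉ S := fun h => hv (Set.mem_insert_iff.mpr (Or.inr h))
    have hvu : v ≠ u := fun h => hv (h ▸ Set.mem_insert u S)
    have hne : G.neighborSet v ∩ S ≠ S := fun h => hvu (hS.2 v hv' u hu (h.trans huS.symm))
    have : (S \ (G.neighborSet v ∩ S)).Nonempty :=
      Set.sdiff_nonempty.mpr fun hsub => hne (le_antisymm Set.inter_subset_right hsub)
    obtain ⟨s, hs⟩ := this
    rw [← compl_nbr_inter hv'] at hs
    exact ⟨s, hs.1, Set.mem_insert_iff.mpr (Or.inr hs.2)⟩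
  · intro a ha b hb h
    have ha' : a ∉ S := fun h => ha (Set.mem_insert_iff.mpr (Or.inr h))
    have hb' : b ∉ S := fun h => hb (Set.mem_insert_iff.mpr (Or.inr h))
    apply loc_c a ha' b hb'
    have : ∀ c : V, Gᶜ.neighborSet c ∩ S = (Gᶜ.neighborSet c ∩ insert u S) ∩ S := by
      intro c
      rw [Set.inter_assoc, Set.inter_eq_self_of_subset_right (Set.subset_insert u S)]
    rw [this a, this b, h]

section
variable [Fintype V] (G : SimpleGraph V)

lemma ld_set_ne : {n | ∃ S : Set V, IsLDSet G S ∧ S.ncard = n}.Nonempty :=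
  ⟨_, Set.univ, univ_ld G, rfl⟩

lemma gld_set_ne : {n | ∃ S : Set V, IsGlobalLDSet G S ∧ S.ncard = n}.Nonempty :=
  ⟨_, Set.univ, ⟨univ_ld G, univ_ld Gᶜ⟩, rfl⟩

lemma ld_le_gld : ldNum G ≤ gldNum G := by
  obtain ⟨T, hT, hTc⟩ := Nat.sInf_mem (gld_set_ne G)
  exact Nat.sInf_le ⟨T, hT.1, hTc⟩

lemma gld_le_ld_succ : gldNum G ≤ ldNum G + 1 := by
  obtain ⟨S, hS, hSc⟩ := Nat.sInf_mem (ld_set_ne G)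
  obtain ⟨T, hT, hTc⟩ := extend_global hS
  calc gldNum G ≤ T.ncard := Nat.sInf_le ⟨T, hT, rfl⟩
    _ ≤ S.ncard + 1 := hTc
    _ = ldNum G + 1 := by rw [ldNum, hSc]

end

theorem stmt13 [Fintype V] (G : SimpleGraph V) :
    gldNum G = ldNum G + 1 ↔
      ∀ S : Set V, IsLDSet G S → S.ncard = ldNum G → ¬ IsLDSet Gᶜ S := by
  constructor
  · intro h S hS hSc hcg
    have : gldNum G ≤ ldNum G := by
      rw [← hSc]; exact Nat.sInf_le ⟨S, ⟨hS, hcg⟩, rfl⟩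
    omega
  · intro h
    have h1 := ld_le_gld G
    have h2 := gld_le_ld_succ G
    rcases eq_or_lt_of_le h1 with heq | hlt
    · obtain ⟨T, hT, hTc⟩ := Nat.sInf_mem (gld_set_ne G)
      exact absurd hT.2 (h T hT.1 (by rw [hTc, ← gldNum, ← heq]))
    · omega
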